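/- If (z,w) ∈ P and z ≠ 0, then s₃(z,w) = (1/conj z, conj w / conj z) again lies in P; that is, the symmetry s₃ maps the Bolza curve to itself. -/

import Mathlib

noncomputable section
open Complex ComplexConjugate

/-- `α = exp(iπ/4)`. -/
def bolzaAlpha : ℂ := Complex.exp (Real.pi * Complex.I / 4)

/-- `β = exp(3iπ/4)`. -/
def bolzaBeta : ℂ := Complex.exp (3 * Real.pi * Complex.I / 4)

/-- The affine Bolza curve `P = {(z,w) : w²(z+α)(z+β) = z(z−α)(z−β)}`. -/
def BolzaCurve : Set (ℂ × ℂ) :=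
  {p | p.2 ^ 2 * (p.1 + bolzaAlpha) * (p.1 + bolzaBeta)
       = p.1 * (p.1 - bolzaAlpha) * (p.1 - bolzaBeta)}

/-- The symmetry `s₁(z,w) = (conj z, conj z / conj w)`. -/
def s1 (p : ℂ × ℂ) : ℂ × ℂ := (conj p.1, conj p.1 / conj p.2)

/-- The symmetry `s₂(z,w) = (−conj z, i·conj w)`. -/
def s2 (p : ℂ × ℂ) : ℂ × ℂ := (-conj p.1, Complex.I * conj p.2)

/-- The symmetry `s₃(z,w) = (1/conj z, conj w / conj z)`. -/
def s3 (p : ℂ × ℂ) : ℂ × ℂ := (1 / conj p.1, conj p.2 / conj p.1)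

/-- The hyperelliptic involution `T(z,w) = (z,−w)`. -/
def hypT (p : ℂ × ℂ) : ℂ × ℂ := (p.1, -p.2)


lemma bolzaAlpha_ne : bolzaAlpha ≠ 0 := Complex.exp_ne_zero _

lemma bolzaBeta_ne : bolzaBeta ≠ 0 := Complex.exp_ne_zero _

lemma conj_bolzaAlpha : (conj bolzaAlpha) * bolzaAlpha = 1 := by
  rw [bolzaAlpha, ← Complex.exp_conj, ← Complex.exp_add]
  have : conj ((Real.pi : ℂ) * Complex.I / 4) = -((Real.pi : ℂ) * Complex.I / 4) := by
    simp [map_div₀, Complex.conj_I, map_ofNat]; ring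
  rw [this, neg_add_cancel, Complex.exp_zero]

lemma conj_bolzaAlpha' : conj bolzaAlpha = bolzaAlpha⁻¹ :=
  eq_inv_of_mul_eq_one_left conj_bolzaAlpha

lemma conj_bolzaBeta : (conj bolzaBeta) * bolzaBeta = 1 := by
  rw [bolzaBeta, ← Complex.exp_conj, ← Complex.exp_add]
  have : conj (3 * (Real.pi : ℂ) * Complex.I / 4) = -(3 * (Real.pi : ℂ) * Complex.I / 4) := by
    simp [map_div₀, Complex.conj_I, map_ofNat]; ring
  rw [this, neg_add_cancel, Complex.exp_zero]

lemma conj_bolzaBeta' : conj bolzaBeta = bolzaBeta⁻¹ :=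
  eq_inv_of_mul_eq_one_left conj_bolzaBeta

/-- If `(z,w) ∈ P` and `z ≠ 0`, then `s₃(z,w)` again lies in `P`. -/
theorem s3_maps_bolza_to_itself (z w : ℂ) (hP : (z, w) ∈ BolzaCurve) (hz : z ≠ 0) :
    s3 (z, w) ∈ BolzaCurve := by
  have hu : conj z ≠ 0 := by simpa using hz
  have hα := bolzaAlpha_ne
  have hβ := bolzaBeta_ne
  have hc := congrArg conj hP
  simp only [BolzaCurve, Set.mem_setOf_eq, map_mul, map_pow, map_add, map_sub] at hc ⊢
  simp only [s3]
  rw [conj_bolzaAlpha', conj_bolzaBeta'] at hc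
  field_simp at hc ⊢
  linear_combination hc

end
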